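/- There is a bijection between properly-marked orientations of the cycle graph C_n and non-empty subgraphs of C_n; under this bijection the number of marked vertices equals the number of edges of the subgraph, and the number of clockwise-directed edges equals the number of vertices of C_n not in the subgraph. -/

import Mathlib

/-- The cycle graph on `ZMod n`, edges {i, i+1}. -/
def cycGraph (m : ℕ) : SimpleGraph (ZMod m) := SimpleGraph.fromRel (fun i j => j = i + 1)

/-- An orientation of the cycle `C_n` is encoded by `f : ZMod n → Bool`, where `f i = true`
means the edge {i, i+1} is directed clockwise (from i to i+1), and `f i = false` means it
is directed counter-clockwise (from i+1 to i). A marked orientation is such an `f` together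
with a set `M` of marked vertices. It is properly marked if both edges incident to each
marked vertex are directed counter-clockwise, and at least one edge is counter-clockwise. -/
def ProperlyMarkedOrientation (n : ℕ) (p : (ZMod n → Bool) × Set (ZMod n)) : Prop :=
  (∀ i ∈ p.2, p.1 i = false ∧ p.1 (i - 1) = false) ∧ (∃ i, p.1 i = false)

section Aux
variable {n : ℕ}

lemma aux_two_ne (hn : 3 ≤ n) : (2 : ZMod n) ≠ 0 := by
  haveI : NeZero n := ⟨by omega⟩
  intro h
  have hd : (n:ℕ) ∣ 2 :=
    (ZMod.natCast_eq_zero_iff 2 n).mp (by push_cast; exact h)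
  have := Nat.le_of_dvd (by norm_num) hd
  omega

lemma aux_self_ne (hn : 3 ≤ n) : ∀ i : ZMod n, i ≠ i + 1 := by
  haveI : Fact (1 < n) := ⟨by omega⟩
  intro i h
  exact one_ne_zero (α := ZMod n) (by simpa using (congrArg (· - i) h).symm)

lemma aux_sub_ne (hn : 3 ≤ n) : ∀ i : ZMod n, i - 1 ≠ i + 1 := by
  intro i h
  apply aux_two_ne hn
  have : (2 : ZMod n) = (i + 1) - (i - 1) := by ring
  rw [this, ← h, sub_self]

end Aux

section Main
variable {n : ℕ}

def mkSub (hn : 3 ≤ n) (f : ZMod n → Bool) (M : Set (ZMod n))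
    (hp : ProperlyMarkedOrientation n (f, M)) : (cycGraph n).Subgraph where
  verts := {i | f i = false}
  Adj i j := (j = i + 1 ∧ j ∈ M) ∨ (i = j + 1 ∧ i ∈ M)
  adj_sub := by
    rintro i j (⟨rfl, hj⟩ | ⟨rfl, hi⟩)
    · exact ⟨aux_self_ne hn i, Or.inl rfl⟩
    · exact ⟨(aux_self_ne hn j).symm, Or.inr rfl⟩
  edge_vert := by
    rintro i j (⟨rfl, hj⟩ | ⟨rfl, hi⟩)
    · have := (hp.1 _ hj).2
      simpa using this
    · exact (hp.1 _ hi).1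
  symm := ⟨fun i j h => h.symm⟩

open Classical in
noncomputable def fromSub (H : (cycGraph n).Subgraph) :
    (ZMod n → Bool) × Set (ZMod n) :=
  (fun i => !decide (i ∈ H.verts), {i | H.Adj (i - 1) i})

lemma fromSub_pmo (H : (cycGraph n).Subgraph) (hH : H.verts.Nonempty) :
    ProperlyMarkedOrientation n (fromSub H) := by
  classical
  constructor
  · intro i hi
    have h : H.Adj (i - 1) i := hi
    constructor
    · simp [fromSub, H.edge_vert h.symm]
    · simp [fromSub, H.edge_vert h]
  · obtain ⟨i, hi⟩ := hH
    exact ⟨i, by simp [fromSub, hi]⟩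

end Main

theorem pmo_equiv_subgraphs (n : ℕ) (hn : 3 ≤ n) :
    ∃ e : {p : (ZMod n → Bool) × Set (ZMod n) // ProperlyMarkedOrientation n p} ≃
        {H : (cycGraph n).Subgraph // H.verts.Nonempty},
      ∀ p, p.1.2.ncard = (e p).1.edgeSet.ncard ∧
        {i | p.1.1 i = true}.ncard = ((e p).1.verts)ᶜ.ncard := by
  classical
  refine ⟨⟨fun p => ⟨mkSub hn p.1.1 p.1.2 p.2, ?_⟩,
      fun H => ⟨fromSub H.1, fromSub_pmo H.1 H.2⟩, ?_, ?_⟩, ?_⟩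
  · obtain ⟨i, hi⟩ := p.2.2
    exact ⟨i, hi⟩
  · -- left inverse
    rintro ⟨⟨f, M⟩, hp⟩
    apply Subtype.ext
    refine Prod.ext ?_ ?_
    · funext i
      simp only [fromSub, mkSub]
      cases h : f i <;> simp [h]
    · ext i
      simp only [fromSub, mkSub, Set.mem_setOf_eq]
      constructor
      · rintro (⟨_, hi⟩ | ⟨h, _⟩)
        · exact hi
        · exact absurd h (aux_sub_ne hn i)
      · intro hi
        exact Or.inl ⟨by ring, hi⟩
  · -- right inverse
    rintro ⟨H, hH⟩
    apply Subtype.ext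
    ext i j
    · simp only [mkSub, fromSub, Set.mem_setOf_eq]
      simp
    · simp only [mkSub, fromSub, Set.mem_setOf_eq]
      constructor
      · rintro (⟨rfl, hj⟩ | ⟨rfl, hi⟩)
        · simpa using hj
        · have h' : H.Adj (j + 1 - 1) (j + 1) := hi
          simp at h'
          exact h'.symm
      · intro h
        have hd := H.adj_sub h
        rcases hd.2 with rfl | rfl
        · exact Or.inl ⟨rfl, by simpa using h⟩
        · refine Or.inr ⟨rfl, ?_⟩
          show H.Adj (j + 1 - 1) (j + 1)
          simpa using h.symm
  · -- counts
    rintro ⟨⟨f, M⟩, hp⟩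
    refine ⟨?_, ?_⟩
    · show M.ncard = (mkSub hn f M hp).edgeSet.ncard
      have himg : (mkSub hn f M hp).edgeSet = (fun i => s(i - 1, i)) '' M := by
        ext e
        induction e using Sym2.ind with
        | _ i j =>
          simp only [SimpleGraph.Subgraph.mem_edgeSet, mkSub, Set.mem_image]
          constructor
          · rintro (⟨rfl, hj⟩ | ⟨rfl, hi⟩)
            · exact ⟨i + 1, hj, by rw [Sym2.eq_iff]; left; simp⟩
            · exact ⟨j + 1, hi, by rw [Sym2.eq_iff]; right; simp⟩
          · rintro ⟨k, hk, he⟩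
            rw [Sym2.eq_iff] at he
            rcases he with ⟨h1, h2⟩ | ⟨h1, h2⟩
            · exact Or.inl ⟨by rw [← h2, ← h1]; ring, h2 ▸ hk⟩
            · exact Or.inr ⟨by rw [← h2, ← h1]; ring, h2 ▸ hk⟩
      rw [himg, Set.ncard_image_of_injective]
      intro a b hab
      rw [Sym2.eq_iff] at hab
      rcases hab with ⟨_, h⟩ | ⟨h1, h2⟩
      · exact h
      · exfalso
        apply aux_sub_ne hn a
        rw [h1, h2]; ring
    · show {i | f i = true}.ncard = ((mkSub hn f M hp).verts)ᶜ.ncard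
      congr 1
      ext i
      simp [mkSub]
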